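/- Let k ≥ 1 and n ≥ 1 be natural numbers, let G_n = {(j₁/n, …, j_k/n) : jᵢ ∈ {0,1,…,n}} ⊂ [0,1]^k be the uniform grid with spacing 1/n, and let ω be a modulus of continuity. Define φ : [0,1]^k → ℝ by φ(t) = ω(dist(t, G_n)), where dist(t, G_n) = min_{p∈G_n} ‖t − p‖₂. Then: (i) φ ∈ X_ω, i.e., |φ(t) − φ(s)| ≤ ω(‖t − s‖₂) for all t, s ∈ [0,1]^k; (ii) φ vanishes at every point of G_n; and (iii) sup_{t ∈ [0,1]^k} |φ(t)| = ω(√k/(2n)). -/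

import Mathlib

noncomputable section

/-- The unit cube $[0,1]^k$ in $\mathbb{R}^k$ with the Euclidean norm. -/
def cube (k : ℕ) : Set (EuclideanSpace ℝ (Fin k)) :=
  {t | ∀ i, t i ∈ Set.Icc (0:ℝ) 1}

/-- The uniform grid with spacing $1/n$ in the unit cube. -/
def grid (k n : ℕ) : Set (EuclideanSpace ℝ (Fin k)) :=
  {p | ∀ i, ∃ j : ℕ, j ≤ n ∧ p i = (j : ℝ) / n}

/-- A modulus of continuity: `ω : [0,∞) → [0,∞)`, `ω 0 = 0`, nondecreasing,
continuous and subadditive (all conditions on `[0,∞)`). -/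
def IsModulus (ω : ℝ → ℝ) : Prop :=
  ω 0 = 0 ∧ (∀ h, 0 ≤ h → 0 ≤ ω h) ∧ (∀ a b, 0 ≤ a → a ≤ b → ω a ≤ ω b) ∧
  ContinuousOn ω (Set.Ici 0) ∧ ∀ a b, 0 ≤ a → 0 ≤ b → ω (a + b) ≤ ω a + ω b

/-- Membership in the class `X_ω` of functions on the unit cube admitting `ω`
as a modulus of continuity (w.r.t. the Euclidean norm). -/
def MemXomega (k : ℕ) (ω : ℝ → ℝ) (x : EuclideanSpace ℝ (Fin k) → ℝ) : Prop :=
  ∀ t ∈ cube k, ∀ s ∈ cube k, |x t - x s| ≤ ω (dist t s)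

lemma coord_exists (n : ℕ) (hn : 1 ≤ n) (x : ℝ) (hx0 : 0 ≤ x) (hx1 : x ≤ 1) :
    ∃ j : ℕ, j ≤ n ∧ |x - (j:ℝ)/n| ≤ 1/(2*n) := by
  have hN : (0:ℝ) < n := by exact_mod_cast hn
  set j : ℕ := ⌊(n:ℝ)*x + 1/2⌋₊ with hj
  have hnx : (0:ℝ) ≤ (n:ℝ)*x + 1/2 := by positivity
  have h1 : (j:ℝ) ≤ (n:ℝ)*x + 1/2 := Nat.floor_le hnx
  have h2 : (n:ℝ)*x + 1/2 < j + 1 := Nat.lt_floor_add_one _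
  refine ⟨j, ?_, ?_⟩
  · have : (j:ℝ) < (n:ℝ) + 1 := by nlinarith
    exact_mod_cast Nat.lt_succ_iff.mp (by exact_mod_cast this)
  · have key : |(n:ℝ)*x - j| ≤ 1/2 := by rw [abs_le]; constructor <;> linarith
    have e : x - (j:ℝ)/n = ((n:ℝ)*x - j)/n := by field_simp
    have e2 : 1/(2*(n:ℝ)) = (1/2)/n := by ring
    rw [e, e2, abs_div, abs_of_pos hN]
    gcongr

lemma coord_far (n : ℕ) (hn : 1 ≤ n) (j : ℕ) (hj : j ≤ n) :
    1/(2*(n:ℝ)) ≤ |1/(2*(n:ℝ)) - (j:ℝ)/n| := by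
  have hN : (0:ℝ) < n := by exact_mod_cast hn
  rcases Nat.eq_zero_or_pos j with h | h
  · simp only [h, Nat.cast_zero, zero_div, sub_zero]
    exact le_abs_self _
  · have h1 : (1:ℝ) ≤ j := by exact_mod_cast h
    have hdn : 1/(2*(n:ℝ)) = (1/(n:ℝ))/2 := by ring
    have hn0 : (0:ℝ) ≤ 1/(n:ℝ) := by positivity
    have hjn : 1/(n:ℝ) ≤ (j:ℝ)/n := by gcongr
    rw [abs_sub_comm, abs_of_nonneg (by linarith)]
    linarith

/-- The extremal function `φ(t) = ω(dist(t, G_n))` belongs to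
`X_ω`, vanishes on the grid `G_n`, and has uniform norm exactly `ω(√k/(2n))` on
the unit cube. -/
theorem extremal_function_properties
    (k n : ℕ) (hk : 1 ≤ k) (hn : 1 ≤ n)
    (ω : ℝ → ℝ) (hω : IsModulus ω) :
    MemXomega k ω (fun t => ω (Metric.infDist t (grid k n))) ∧
    (∀ p ∈ grid k n, ω (Metric.infDist p (grid k n)) = 0) ∧
    (⨆ t : cube k, |ω (Metric.infDist t.1 (grid k n))|)
      = ω (Real.sqrt k / (2 * n)) := by
  obtain ⟨h0, hpos, hmono, hcont, hsub⟩ := hω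
  have hN : (0:ℝ) < n := by exact_mod_cast hn
  set G := grid k n with hG
  -- grid is nonempty
  have hGne : G.Nonempty := by
    refine ⟨(WithLp.toLp 2 (fun _ => (0:ℝ)) : EuclideanSpace ℝ (Fin k)), fun i => ⟨0, Nat.zero_le n, by simp⟩⟩
  set B : ℝ := Real.sqrt k / (2 * n) with hB
  have hB0 : 0 ≤ B := by positivity
  have hBsq : B ^ 2 = (k : ℝ) * (1/(2*n))^2 := by
    rw [hB, div_pow, Real.sq_sqrt (by positivity : (0:ℝ) ≤ (k:ℝ))]
    ring
  -- upper bound: every cube point is within B of the grid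
  have hupper : ∀ t ∈ cube k, Metric.infDist t G ≤ B := by
    intro t ht
    have hc := fun i => coord_exists n hn (t i) (ht i).1 (ht i).2
    choose j hjn hjd using hc
    set p : EuclideanSpace ℝ (Fin k) := WithLp.toLp 2 (fun i => (j i : ℝ)/n) with hp
    have hpG : p ∈ G := fun i => ⟨j i, hjn i, rfl⟩
    refine le_trans (Metric.infDist_le_dist_of_mem hpG) ?_
    rw [EuclideanSpace.dist_eq]
    have hsum : ∑ i, dist (t i) (p i) ^ 2 ≤ (k:ℝ) * (1/(2*n))^2 := by
      calc ∑ i, dist (t i) (p i) ^ 2 ≤ ∑ _i : Fin k, (1/(2*(n:ℝ)))^2 := by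
            refine Finset.sum_le_sum fun i _ => ?_
            have := hjd i
            rw [Real.dist_eq]
            have habs : |t i - p i| ≤ 1/(2*(n:ℝ)) := this
            nlinarith [abs_nonneg (t i - p i)]
        _ = (k:ℝ) * (1/(2*n))^2 := by simp [Finset.card_univ]
    calc Real.sqrt (∑ i, dist (t i) (p i) ^ 2) ≤ Real.sqrt (B^2) :=
          Real.sqrt_le_sqrt (by rw [hBsq]; exact hsum)
      _ = B := Real.sqrt_sq hB0
  -- center point
  set c : EuclideanSpace ℝ (Fin k) := WithLp.toLp 2 (fun _ : Fin k => 1/(2*(n:ℝ))) with hc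
  have hcC : c ∈ cube k := by
    intro i
    constructor
    · positivity
    · have hN1 : (1:ℝ) ≤ n := by exact_mod_cast hn
      rw [div_le_one (by positivity)]; linarith
  have hlower : B ≤ Metric.infDist c G := by
    by_contra hcon
    push_neg at hcon
    obtain ⟨p, hpG, hpd⟩ := (Metric.infDist_lt_iff hGne).mp hcon
    refine absurd hpd (not_lt.mpr ?_)
    rw [EuclideanSpace.dist_eq]
    have hsum : (k:ℝ) * (1/(2*n))^2 ≤ ∑ i, dist (c i) (p i) ^ 2 := by
      calc (k:ℝ) * (1/(2*n))^2 = ∑ _i : Fin k, (1/(2*(n:ℝ)))^2 := by simp [Finset.card_univ]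
        _ ≤ ∑ i, dist (c i) (p i) ^ 2 := by
            refine Finset.sum_le_sum fun i _ => ?_
            obtain ⟨j, hj, hpe⟩ := hpG i
            have := coord_far n hn j hj
            rw [Real.dist_eq, hpe]
            have h0' : (0:ℝ) ≤ 1/(2*(n:ℝ)) := by positivity
            nlinarith [abs_nonneg ((1:ℝ)/(2*(n:ℝ)) - (j:ℝ)/n)]
    calc B = Real.sqrt (B^2) := (Real.sqrt_sq hB0).symm
      _ ≤ Real.sqrt (∑ i, dist (c i) (p i) ^ 2) := Real.sqrt_le_sqrt (by rw [hBsq]; exact hsum)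
  refine ⟨?_, ?_, ?_⟩
  · -- MemXomega
    intro t _ s _
    have key : ∀ u v : EuclideanSpace ℝ (Fin k),
        ω (Metric.infDist u G) - ω (Metric.infDist v G) ≤ ω (dist u v) := by
      intro u v
      have h1 : Metric.infDist u G ≤ Metric.infDist v G + dist u v :=
        Metric.infDist_le_infDist_add_dist
      have h2 : ω (Metric.infDist u G) ≤ ω (Metric.infDist v G + dist u v) :=
        hmono _ _ Metric.infDist_nonneg h1
      have h3 := hsub (Metric.infDist v G) (dist u v) Metric.infDist_nonneg dist_nonneg
      linarith
    rw [abs_sub_le_iff]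
    exact ⟨key t s, by rw [dist_comm]; exact key s t⟩
  · intro p hp
    rw [Metric.infDist_zero_of_mem hp, h0]
  · -- sup
    have habs : ∀ t : cube k, |ω (Metric.infDist t.1 G)| = ω (Metric.infDist t.1 G) :=
      fun t => abs_of_nonneg (hpos _ Metric.infDist_nonneg)
    have hub : ∀ t : cube k, |ω (Metric.infDist t.1 G)| ≤ ω B := by
      intro t
      rw [habs t]
      exact hmono _ _ Metric.infDist_nonneg (hupper t.1 t.2)
    have hbdd : BddAbove (Set.range fun t : cube k => |ω (Metric.infDist t.1 G)|) := by
      refine ⟨ω B, ?_⟩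
      rintro x ⟨t, rfl⟩
      exact hub t
    haveI : Nonempty (cube k) := ⟨⟨c, hcC⟩⟩
    apply le_antisymm
    · exact ciSup_le hub
    · have h1 : ω B ≤ |ω (Metric.infDist c G)| := by
        rw [abs_of_nonneg (hpos _ Metric.infDist_nonneg)]
        exact hmono _ _ hB0 hlower
      exact h1.trans (le_ciSup hbdd (⟨c, hcC⟩ : cube k))
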